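/- Given a commutative diagram of monoids consisting of two short exact sequences of monoids 0 → K → A → B → 0 and 0 → K' → A' → B' → 0 (with vertical morphisms a : K → K', b : A → A', c : B → B'), where both rows are special Schreier extensions (i.e., A → B and A' → B' are surjective special Schreier morphisms with the given kernels), if a is an isomorphism then the right-hand square (b, c with A → B and A' → B') is a pullback of monoids. -/
import Mathlib


/-- A surjective monoid homomorphism `f` is a special Schreier morphism when every pair
`a, b` with `f a = f b` admits a unique kernel element `k` (`f k = 0`) with `b = k + a`. -/
def IsSpecialSchreier {A B : Type*} [AddMonoid A] [AddMonoid B] (f : A →+ B) : Prop :=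
  ∀ a b : A, f a = f b → ∃! k : A, f k = 0 ∧ b = k + a

/-- Given a morphism of special Schreier extensions of monoids
`(a, b, c) : (K → A → B) → (K' → A' → B')` in which `a` is an isomorphism, the
right-hand square is a pullback of monoids. -/
theorem stmt_5 (K A B K' A' B' : Type*)
    [AddMonoid K] [AddMonoid A] [AddMonoid B] [AddMonoid K'] [AddMonoid A'] [AddMonoid B']
    (i : K →+ A) (f : A →+ B) (i' : K' →+ A') (f' : A' →+ B')
    (a : K →+ K') (b : A →+ A') (c : B →+ B')
    -- the rows are short exact sequences of monoids:
    (hi : Function.Injective i) (hf : Function.Surjective f)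
    (hker : ∀ x : A, f x = 0 ↔ x ∈ Set.range i)
    (hi' : Function.Injective i') (hf' : Function.Surjective f')
    (hker' : ∀ x : A', f' x = 0 ↔ x ∈ Set.range i')
    -- the rows are special Schreier extensions:
    (hS : IsSpecialSchreier f) (hS' : IsSpecialSchreier f')
    -- the diagram commutes:
    (hcl : ∀ k : K, b (i k) = i' (a k)) (hcr : ∀ x : A, c (f x) = f' (b x))
    -- `a` is an isomorphism:
    (ha : Function.Bijective a) :
    -- the right-hand square is a pullback of monoids:
    ∀ (y : B) (z : A'), c y = f' z → ∃! x : A, f x = y ∧ b x = z := by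
  intro y z hyz
  obtain ⟨x₀, hx₀⟩ := hf y
  have heq : f' (b x₀) = f' z := by rw [← hcr, hx₀, hyz]
  obtain ⟨k', ⟨hk'0, hk'z⟩, hk'uniq⟩ := hS' (b x₀) z heq
  obtain ⟨m', hm'⟩ := (hker' k').mp hk'0
  obtain ⟨m, hm⟩ := ha.2 m'
  refine ⟨i m + x₀, ⟨?_, ?_⟩, ?_⟩
  · have : f (i m) = 0 := (hker (i m)).mpr ⟨m, rfl⟩
    rw [map_add, this, zero_add, hx₀]
  · rw [map_add, hcl, hm, hm', ← hk'z]
  · rintro x ⟨hfx, hbx⟩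
    -- show x = i m + x₀
    have hfx0 : f x = f x₀ := by rw [hfx, hx₀]
    obtain ⟨k, ⟨hk0, hkx⟩, hkuniq⟩ := hS x₀ x hfx0.symm
    obtain ⟨n, hn⟩ := (hker k).mp hk0
    -- z = b x = b k + b x₀, and z = k' + b x₀; uniqueness gives b k = k'
    have hbk0 : f' (b k) = 0 := by rw [← hcr, hk0, map_zero]
    have hz : z = b k + b x₀ := by rw [← hbx, hkx, map_add]
    have : b k = k' := hk'uniq (b k) ⟨hbk0, hz⟩
    have hik : i' (a n) = i' m' := by rw [← hcl, hn, this, hm']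
    have : a n = a m := by rw [hi' hik, hm]
    have hnm : n = m := ha.1 this
    rw [hkx, ← hn, hnm]
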